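/- Let V be a vector space over an algebraically closed field F and let d₁, ..., d_k be pairwise commuting locally-finite F-linear endomorphisms of V. For α = (α₁,...,α_k) ∈ F^k let V_α = {v ∈ V : for each i ∈ {1,...,k} there is m ∈ ℕ with (d_i − α_i)^m(v) = 0}. Then V is the internal direct sum of the subspaces V_α over α ∈ F^k; that is, every v ∈ V is a finite sum of elements of the V_α, and the spaces V_α for distinct α are independent. -/

import Mathlib

open Module.End Set Function

/-- Build a finite-dimensional submodule containing `v`, invariant under all `d i`. -/
theorem exists_invt_fd (F : Type*) [Field F] (V : Type*) [AddCommGroup V] [Module F V] (k : ℕ)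
    (d : Fin k → Module.End F V)
    (hcomm : ∀ i j, d i * d j = d j * d i)
    (hlf : ∀ i, ∀ v : V,
      FiniteDimensional F (Submodule.span F (Set.range fun m : ℕ => (d i ^ m) v)))
    (v : V) (S : Finset (Fin k)) :
    ∃ W : Submodule F V, FiniteDimensional F W ∧ v ∈ W ∧ ∀ i ∈ S, ∀ x ∈ W, d i x ∈ W := by
  classical
  induction S using Finset.induction_on with
  | empty =>
    exact ⟨Submodule.span F {v}, inferInstance, Submodule.mem_span_singleton_self v, by simp⟩
  | insert _ _ hns ih =>
    rename_i n S
    obtain ⟨W, hWfd, hvW, hWinv⟩ := ih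
    obtain ⟨s, hs⟩ := (Submodule.fg_iff_finiteDimensional W).mpr hWfd
    set W' : Submodule F V :=
      ⨆ x : s, Submodule.span F (Set.range fun m : ℕ => (d n ^ m) (x : V)) with hW'
    have hWfd' : FiniteDimensional F W' := by
      have := fun x : s => hlf n (x : V)
      infer_instance
    have hle : W ≤ W' := by
      rw [← hs, Submodule.span_le]
      intro x hx
      have : x = (d n ^ 0) x := by simp
      rw [this]
      exact le_iSup (fun x : s => Submodule.span F (Set.range fun m : ℕ => (d n ^ m) (x : V)))
        ⟨x, hx⟩ (Submodule.subset_span ⟨0, rfl⟩)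
    have hpow : ∀ (m : ℕ) (w : V), w ∈ W → (d n ^ m) w ∈ W' := by
      intro m w hw
      rw [← hs] at hw
      have : Submodule.map (d n ^ m) (Submodule.span F (s : Set V)) ≤ W' := by
        rw [Submodule.map_span, Submodule.span_le]
        rintro - ⟨x, hx, rfl⟩
        exact le_iSup (fun x : s => Submodule.span F (Set.range fun m : ℕ => (d n ^ m) (x : V)))
          ⟨x, hx⟩ (Submodule.subset_span ⟨m, rfl⟩)
      exact this ⟨w, hw, rfl⟩
    refine ⟨W', hWfd', hle hvW, ?_⟩
    have key : ∀ (g : Module.End F V), (∀ (m : ℕ) (x : V), x ∈ s →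
        g ((d n ^ m) x) ∈ W') → ∀ x ∈ W', g x ∈ W' := by
      intro g hg x hx
      have : Submodule.map g W' ≤ W' := by
        rw [hW', Submodule.map_iSup]
        refine iSup_le fun y => ?_
        rw [Submodule.map_span, Submodule.span_le]
        rintro - ⟨-, ⟨m, rfl⟩, rfl⟩
        exact hg m y y.2
      exact this ⟨x, hx, rfl⟩
    intro i hi x hx
    rcases Finset.mem_insert.mp hi with rfl | hiS
    · refine key (d i) (fun m x hx => ?_) x hx
      have : (d i) ((d i ^ m) x) = (d i ^ (m + 1)) x := by
        rw [pow_succ']; rfl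
      rw [this]
      exact le_iSup (fun x : s => Submodule.span F (Set.range fun m : ℕ => (d i ^ m) (x : V)))
        ⟨x, hx⟩ (Submodule.subset_span ⟨m + 1, rfl⟩)
    · refine key (d i) (fun m x hx => ?_) x hx
      have hc : d i * d n ^ m = d n ^ m * d i := (Commute.pow_right (hcomm i n) m)
      have : (d i) ((d n ^ m) x) = (d n ^ m) ((d i) x) := by
        have := LinearMap.ext_iff.mp hc x
        simpa using this
      rw [this]
      exact hpow m _ (hWinv i hiS x ((hs ▸ Submodule.subset_span hx)))

theorem gen_weight_space_decomposition (F : Type*) [Field F] [IsAlgClosed F]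
    (V : Type*) [AddCommGroup V] [Module F V] (k : ℕ)
    (d : Fin k → Module.End F V)
    (hcomm : ∀ i j, d i * d j = d j * d i)
    (hlf : ∀ i, ∀ v : V,
      FiniteDimensional F (Submodule.span F (Set.range fun m : ℕ => (d i ^ m) v)))
    (Vsp : (Fin k → F) → Submodule F V)
    (hVsp : ∀ α : Fin k → F, (Vsp α : Set V) =
      {v : V | ∀ i, ∃ m : ℕ, ((d i - α i • (1 : Module.End F V)) ^ m) v = 0}) :
    iSupIndep Vsp ∧ (⨆ α : Fin k → F, Vsp α) = ⊤ := by
  have key : ∀ α, Vsp α = ⨅ i, (d i).maxGenEigenspace (α i) := by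
    intro α
    ext v
    rw [← SetLike.mem_coe, hVsp, Set.mem_setOf_eq, Module.End.mem_iInf_maxGenEigenspace_iff]
  have hmapsTo : ∀ i j φ, MapsTo (d i) ((d j).maxGenEigenspace φ) ((d j).maxGenEigenspace φ) :=
    fun i j φ => Module.End.mapsTo_maxGenEigenspace_of_comm (hcomm j i) φ
  constructor
  · have := Module.End.independent_iInf_maxGenEigenspace_of_forall_mapsTo d hmapsTo
    simpa only [← key] using this
  · rw [eq_top_iff]
    intro v _
    obtain ⟨W, hWfd, hvW, hWinv⟩ := exists_invt_fd F V k d hcomm hlf v Finset.univ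
    have hmt : ∀ i, MapsTo (d i) W W := fun i x hx => hWinv i (Finset.mem_univ i) x hx
    set g : Fin k → Module.End F W := fun i => (d i).restrict (hmt i) with hg
    have hgcomm : Pairwise fun i j => Commute (g i) (g j) := by
      intro i j _
      ext x
      have := LinearMap.ext_iff.mp (hcomm i j) (x : V)
      exact this
    have htop : ⨆ χ : Fin k → F, ⨅ i, (g i).maxGenEigenspace (χ i) = ⊤ :=
      Module.End.iSup_iInf_maxGenEigenspace_eq_top_of_iSup_maxGenEigenspace_eq_top_of_commute
        g hgcomm (fun i => Module.End.iSup_maxGenEigenspace_eq_top (g i))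
    have hv' : (⟨v, hvW⟩ : W) ∈ ⨆ χ : Fin k → F, ⨅ i, (g i).maxGenEigenspace (χ i) := by
      rw [htop]; trivial
    have : v ∈ Submodule.map W.subtype (⨆ χ : Fin k → F, ⨅ i, (g i).maxGenEigenspace (χ i)) :=
      ⟨_, hv', rfl⟩
    rw [Submodule.map_iSup] at this
    have hle : ∀ χ : Fin k → F,
        Submodule.map W.subtype (⨅ i, (g i).maxGenEigenspace (χ i)) ≤ Vsp χ := by
      intro χ
      rw [key χ, ← Submodule.inf_iInf_maxGenEigenspace_of_forall_mapsTo d W hmt]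
      exact inf_le_right
    exact iSup_mono hle this
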